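/- Stability preservation under one-sided reduction: if A + Aᵀ is negative definite and E is symmetric positive definite, and V has full column rank, then for Er := VᵀEV and Ar := VᵀAV, the matrix Ar + Arᵀ is negative definite and Er is positive definite; consequently every eigenvalue λ of the pencil (Ar, Er) (i.e. Ar v = λ Er v, v ≠ 0) has negative real part. -/

import Mathlib

open Matrix

private lemma dot_re' {r : ℕ} (M : Matrix (Fin r) (Fin r) ℝ) (v : Fin r → ℂ) :
    (star v ⬝ᵥ (M.map Complex.ofReal) *ᵥ v).re
      = (fun i => (v i).re) ⬝ᵥ M *ᵥ (fun i => (v i).re)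
        + (fun i => (v i).im) ⬝ᵥ M *ᵥ (fun i => (v i).im) := by
  simp only [dotProduct, mulVec, map_apply, Pi.star_apply, Finset.mul_sum,
    Complex.re_sum, ← Finset.sum_add_distrib]
  refine Finset.sum_congr rfl fun i _ => Finset.sum_congr rfl fun j _ => ?_
  simp [Complex.mul_re, Complex.mul_im]

private lemma dot_im' {r : ℕ} (M : Matrix (Fin r) (Fin r) ℝ) (v : Fin r → ℂ) :
    (star v ⬝ᵥ (M.map Complex.ofReal) *ᵥ v).im
      = (fun i => (v i).re) ⬝ᵥ M *ᵥ (fun i => (v i).im)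
        - (fun i => (v i).im) ⬝ᵥ M *ᵥ (fun i => (v i).re) := by
  simp only [dotProduct, mulVec, map_apply, Pi.star_apply, Finset.mul_sum,
    Complex.im_sum, ← Finset.sum_sub_distrib]
  refine Finset.sum_congr rfl fun i _ => Finset.sum_congr rfl fun j _ => ?_
  simp [Complex.mul_re, Complex.mul_im]
  ring

private lemma dot_transpose' {r : ℕ} (M : Matrix (Fin r) (Fin r) ℝ) (x y : Fin r → ℝ) :
    y ⬝ᵥ M *ᵥ x = x ⬝ᵥ Mᵀ *ᵥ y := by
  rw [dotProduct_mulVec, ← mulVec_transpose, dotProduct_comm]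

private lemma posdef_reduce {n r : ℕ} (M : Matrix (Fin n) (Fin n) ℝ) (hM : M.PosDef)
    (V : Matrix (Fin n) (Fin r) ℝ)
    (hV : ∀ x : Fin r → ℝ, V.mulVec x = 0 → x = 0) :
    (Vᵀ * M * V).PosDef := by
  refine PosDef.of_dotProduct_mulVec_pos ?_ ?_
  · simpa using isHermitian_conjTranspose_mul_mul V hM.1
  · intro x hx
    have h1 : star x ⬝ᵥ (Vᵀ * M * V) *ᵥ x = star (V *ᵥ x) ⬝ᵥ M *ᵥ (V *ᵥ x) := by
      rw [star_trivial, star_trivial, ← mulVec_mulVec, ← mulVec_mulVec,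
        dotProduct_mulVec, vecMul_transpose]
    rw [h1]
    exact hM.dotProduct_mulVec_pos fun h => hx (hV x h)

/-- Stability preservation under one-sided reduction: if E is symmetric
positive definite, A + Aᵀ is negative definite and V has full column rank,
then Er := VᵀEV is positive definite, Ar + Arᵀ is negative definite (with
Ar := VᵀAV), and every eigenvalue of the pencil (Ar, Er) has negative real
part. -/
theorem stability_preservation_one_sided {n r : ℕ}
    (E A : Matrix (Fin n) (Fin n) ℝ) (hE : E.PosDef)
    (hA : (-(A + Aᵀ)).PosDef)
    (V : Matrix (Fin n) (Fin r) ℝ)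
    (hV : ∀ x : Fin r → ℝ, V.mulVec x = 0 → x = 0) :
    (Vᵀ * E * V).PosDef ∧
    (-(Vᵀ * A * V + (Vᵀ * A * V)ᵀ)).PosDef ∧
    ∀ (lam : ℂ) (v : Fin r → ℂ), v ≠ 0 →
      ((Vᵀ * A * V).map (Complex.ofReal)).mulVec v =
        lam • ((Vᵀ * E * V).map (Complex.ofReal)).mulVec v →
      lam.re < 0 := by
  have hEr : (Vᵀ * E * V).PosDef := posdef_reduce E hE V hV
  have hmat : -(Vᵀ * A * V + (Vᵀ * A * V)ᵀ) = Vᵀ * (-(A + Aᵀ)) * V := by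
    simp [transpose_mul, Matrix.mul_add, Matrix.add_mul, Matrix.mul_neg,
      Matrix.neg_mul, Matrix.mul_assoc]
  have hAr : (-(Vᵀ * A * V + (Vᵀ * A * V)ᵀ)).PosDef := by
    rw [hmat]; exact posdef_reduce _ hA V hV
  refine ⟨hEr, hAr, ?_⟩
  intro lam v hv heq
  set Ar := Vᵀ * A * V with hArdef
  set Er := Vᵀ * E * V with hErdef
  set x : Fin r → ℝ := fun i => (v i).re with hxdef
  set y : Fin r → ℝ := fun i => (v i).im with hydef
  -- at least one of x, y is nonzero
  have hxy : x ≠ 0 ∨ y ≠ 0 := by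
    by_contra h
    push_neg at h
    apply hv
    funext i
    have h1 : x i = 0 := by rw [h.1]; rfl
    have h2 : y i = 0 := by rw [h.2]; rfl
    exact Complex.ext h1 h2
  -- the quadratic forms
  have hsymEr : Erᵀ = Er := (by simpa using hEr.1 : Er.IsSymm).eq
  set α : ℂ := star v ⬝ᵥ (Ar.map Complex.ofReal) *ᵥ v with hαdef
  set β : ℂ := star v ⬝ᵥ (Er.map Complex.ofReal) *ᵥ v with hβdef
  have hαβ : α = lam * β := by
    rw [hαdef, hβdef, heq, dotProduct_smul, smul_eq_mul]
  -- β has positive real part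
  have hquad : ∀ z : Fin r → ℝ, 0 ≤ z ⬝ᵥ Er *ᵥ z := by
    intro z
    have := hEr.posSemidef.dotProduct_mulVec_nonneg z
    simpa using this
  have hquadpos : ∀ z : Fin r → ℝ, z ≠ 0 → 0 < z ⬝ᵥ Er *ᵥ z := by
    intro z hz
    have := hEr.dotProduct_mulVec_pos hz
    simpa using this
  have hβre : 0 < β.re := by
    rw [hβdef, dot_re' Er v]
    rcases hxy with h | h
    · have := hquadpos x h
      have := hquad y
      linarith
    · have := hquadpos y h
      have := hquad x
      linarith
  -- β is real
  have hβim : β.im = 0 := by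
    rw [hβdef, dot_im' Er v, dot_transpose' Er x y, hsymEr]
    ring
  -- α has negative real part
  have hAquad : ∀ z : Fin r → ℝ, z ≠ 0 → z ⬝ᵥ Ar *ᵥ z < 0 := by
    intro z hz
    have h1 := hAr.dotProduct_mulVec_pos hz
    rw [star_trivial] at h1
    have h2 : z ⬝ᵥ (-(Ar + Arᵀ)) *ᵥ z = -(z ⬝ᵥ Ar *ᵥ z + z ⬝ᵥ Arᵀ *ᵥ z) := by
      simp [Matrix.add_mulVec, Matrix.neg_mulVec, dotProduct_add]
    have h3 : z ⬝ᵥ Arᵀ *ᵥ z = z ⬝ᵥ Ar *ᵥ z := (dot_transpose' Ar z z).symm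
    rw [h2, h3] at h1
    linarith
  have hAquad0 : ∀ z : Fin r → ℝ, z ⬝ᵥ Ar *ᵥ z ≤ 0 := by
    intro z
    by_cases hz : z = 0
    · simp [hz]
    · exact le_of_lt (hAquad z hz)
  have hαre : α.re < 0 := by
    rw [hαdef, dot_re' Ar v]
    rcases hxy with h | h
    · have := hAquad x h
      have := hAquad0 y
      linarith
    · have := hAquad y h
      have := hAquad0 x
      linarith
  -- conclude
  have hre : α.re = lam.re * β.re := by
    rw [hαβ, Complex.mul_re, hβim]
    ring
  nlinarith [hβre, hαre, hre]
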